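/- Let x₁, …, x_N be pairwise distinct points in ℝ^d and let ε > 0. Then the N×N matrix A with entries A_{ij} = exp(−ε²‖x_i − x_j‖²) is symmetric positive definite; in particular, A is invertible, so the Gaussian RBF interpolation problem with distinct nodes has a unique solution. -/

import Mathlib

open scoped RealInnerProductSpace
open Finset

namespace GaussianRBF

variable {d N : ℕ}

local notation "E" => EuclideanSpace ℝ (Fin d)

/-- exp series swap with a finite sum. -/
lemma sum_mul_exp {ι : Type*} [Fintype ι] (c : ι → ℝ) (v : ι → ℝ) :
    ∑ i, c i * Real.exp (v i) = ∑' n : ℕ, ∑ i, c i * (v i ^ n / (Nat.factorial n)) := by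
  have hexp : ∀ i, Real.exp (v i) = ∑' n : ℕ, v i ^ n / (Nat.factorial n) := by
    intro i
    rw [Real.exp_eq_exp_ℝ, NormedSpace.exp_eq_tsum_div]
  have hsum : ∀ i : ι, Summable (fun n : ℕ => c i * (v i ^ n / (Nat.factorial n))) :=
    fun i => (Real.summable_pow_div_factorial (v i)).mul_left _
  calc ∑ i, c i * Real.exp (v i)
      = ∑ i, ∑' n : ℕ, c i * (v i ^ n / (Nat.factorial n)) := by
        refine Finset.sum_congr rfl fun i _ => ?_
        rw [hexp i, ← tsum_mul_left]
    _ = ∑' n : ℕ, ∑ i, c i * (v i ^ n / (Nat.factorial n)) :=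
        (Summable.tsum_finsetSum fun i _ => hsum i).symm

lemma inner_pow (n : ℕ) (a y : E) :
    ⟪a, y⟫ ^ n = ∑ α : Fin n → Fin d, (∏ t, a (α t)) * ∏ t, y (α t) := by
  have : ⟪a, y⟫ = ∑ k, a k * y k := by
    simp [PiLp.inner_apply, RCLike.inner_apply, mul_comm]
  rw [this, Fintype.sum_pow]
  refine Finset.sum_congr rfl fun α _ => ?_
  rw [← Finset.prod_mul_distrib]

lemma sum_inner_pow (n : ℕ) (w : Fin N → ℝ) (z : Fin N → E) (y : E) :
    ∑ i, w i * ⟪z i, y⟫ ^ n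
      = ∑ α : Fin n → Fin d, (∑ i, w i * ∏ t, z i (α t)) * ∏ t, y (α t) := by
  simp_rw [inner_pow, Finset.mul_sum, Finset.sum_mul]
  rw [Finset.sum_comm]
  refine Finset.sum_congr rfl fun α _ => Finset.sum_congr rfl fun i _ => by ring

lemma double_sum_inner_pow (n : ℕ) (w : Fin N → ℝ) (z : Fin N → E) :
    ∑ i, ∑ j, w i * w j * ⟪z i, z j⟫ ^ n
      = ∑ α : Fin n → Fin d, (∑ i, w i * ∏ t, z i (α t)) ^ 2 := by
  have h1 : ∀ i, ∑ j, w i * w j * ⟪z i, z j⟫ ^ n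
      = w i * ∑ j, w j * ⟪z j, z i⟫ ^ n := by
    intro i
    rw [Finset.mul_sum]
    refine Finset.sum_congr rfl fun j _ => ?_
    rw [real_inner_comm]; ring
  simp_rw [h1, sum_inner_pow, Finset.mul_sum]
  rw [Finset.sum_comm]
  refine Finset.sum_congr rfl fun α _ => ?_
  have : ∀ x : Fin N, w x * ((∑ i, w i * ∏ t, z i (α t)) * ∏ t, z x (α t))
      = (∑ i, w i * ∏ t, z i (α t)) * (w x * ∏ t, z x (α t)) := fun x => by ring
  simp_rw [this]
  rw [← Finset.mul_sum, sq]

/-- The additive character `y ↦ exp ⟪z, y⟫` as a monoid hom. -/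
noncomputable def expChar (z : E) : Multiplicative E →* ℝ where
  toFun y := Real.exp ⟪z, Multiplicative.toAdd y⟫
  map_one' := by simp
  map_mul' a b := by
    simp [inner_add_right, Real.exp_add]

lemma expChar_injective : Function.Injective (expChar (d := d)) := by
  intro a b hab
  have h := congrArg (fun f => f.toFun (Multiplicative.ofAdd (a - b))) hab
  simp only [expChar, MonoidHom.coe_mk, OneHom.coe_mk] at h
  have h2 : ⟪a, a - b⟫ = ⟪b, a - b⟫ := Real.exp_injective h
  have h3 : ⟪a - b, a - b⟫ = (0 : ℝ) := by
    rw [inner_sub_left, h2, sub_self]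
  rwa [inner_self_eq_zero, sub_eq_zero] at h3

lemma eq_zero_of_sum_exp_eq_zero (w : Fin N → ℝ) (z : Fin N → E)
    (hz : Function.Injective z)
    (h : ∀ y : E, ∑ i, w i * Real.exp ⟪z i, y⟫ = 0) : w = 0 := by
  have li : LinearIndependent ℝ (fun i : Fin N => ((expChar (z i)) : Multiplicative E → ℝ)) := by
    have := linearIndependent_monoidHom (Multiplicative E) ℝ
    exact this.comp (fun i => expChar (z i)) fun i j hij => hz (expChar_injective hij)
  have hz0 : ∑ i, w i • (fun y : Multiplicative E => Real.exp ⟪z i, Multiplicative.toAdd y⟫) = 0 := by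
    funext y
    have := h (Multiplicative.toAdd y)
    simpa [Finset.sum_apply] using this
  have := Fintype.linearIndependent_iff.mp li w ?_
  · funext i; exact this i
  · exact hz0

lemma quadform_eq_tsum (w : Fin N → ℝ) (z : Fin N → E) :
    ∑ i, ∑ j, w i * w j * Real.exp ⟪z i, z j⟫
      = ∑' n : ℕ, (∑ α : Fin n → Fin d, (∑ i, w i * ∏ t, z i (α t)) ^ 2) / (Nat.factorial n) := by
  have h := sum_mul_exp (ι := Fin N × Fin N) (fun p => w p.1 * w p.2)
    (fun p => ⟪z p.1, z p.2⟫)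
  rw [Fintype.sum_prod_type] at h
  simp_rw [Fintype.sum_prod_type (f := fun p : Fin N × Fin N =>
    (fun p : Fin N × Fin N => w p.1 * w p.2) p *
      ((fun p : Fin N × Fin N => ⟪z p.1, z p.2⟫) p ^ _ / _))] at h
  rw [h]
  refine tsum_congr fun n => ?_
  rw [← double_sum_inner_pow n w z, Finset.sum_div]
  refine Finset.sum_congr rfl fun i _ => ?_
  rw [Finset.sum_div]
  refine Finset.sum_congr rfl fun j _ => by ring

lemma quadform_summable (w : Fin N → ℝ) (z : Fin N → E) :
    Summable (fun n : ℕ =>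
      (∑ α : Fin n → Fin d, (∑ i, w i * ∏ t, z i (α t)) ^ 2) / (Nat.factorial n)) := by
  have h : Summable (fun n : ℕ => ∑ p : Fin N × Fin N,
      (w p.1 * w p.2) * (⟪z p.1, z p.2⟫ ^ n / (Nat.factorial n))) :=
    summable_sum fun p _ => (Real.summable_pow_div_factorial _).mul_left _
  refine h.congr fun n => ?_
  rw [← double_sum_inner_pow n w z, Fintype.sum_prod_type]
  rw [Finset.sum_div]
  refine Finset.sum_congr rfl fun i _ => ?_
  rw [Finset.sum_div]
  exact Finset.sum_congr rfl fun j _ => by ring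

lemma quadform_pos (w : Fin N → ℝ) (z : Fin N → E) (hz : Function.Injective z) (hw : w ≠ 0) :
    0 < ∑ i, ∑ j, w i * w j * Real.exp ⟪z i, z j⟫ := by
  rw [quadform_eq_tsum]
  set c : ℕ → ℝ := fun n =>
    (∑ α : Fin n → Fin d, (∑ i, w i * ∏ t, z i (α t)) ^ 2) / (Nat.factorial n) with hc
  have hcnn : ∀ n, 0 ≤ c n := fun n =>
    div_nonneg (Finset.sum_nonneg fun α _ => sq_nonneg _) (Nat.cast_nonneg _)
  have hsum : Summable c := quadform_summable w z
  rcases lt_or_eq_of_le (tsum_nonneg hcnn) with h | h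
  · exact h
  exfalso
  -- all terms vanish
  have hterm : ∀ n, c n = 0 := by
    intro n
    have hle : c n ≤ ∑' m, c m := Summable.le_tsum hsum n fun m _ => hcnn m
    have := hle.trans_eq h.symm
    exact le_antisymm this (hcnn n)
  have hT : ∀ (n : ℕ) (α : Fin n → Fin d), (∑ i, w i * ∏ t, z i (α t)) = 0 := by
    intro n α
    have := hterm n
    rw [hc] at this
    simp only [div_eq_zero_iff] at this
    rcases this with h0 | h0
    · have := (Finset.sum_eq_zero_iff_of_nonneg (fun α _ => sq_nonneg _)).mp h0 α (Finset.mem_univ _)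
      exact sq_eq_zero_iff.mp this
    · exact absurd h0 (Nat.cast_ne_zero.mpr (Nat.factorial_ne_zero n))
  -- hence all moment sums vanish at every y
  have hmom : ∀ (y : E) (n : ℕ), ∑ i, w i * ⟪z i, y⟫ ^ n = 0 := by
    intro y n
    rw [sum_inner_pow]
    exact Finset.sum_eq_zero fun α _ => by rw [hT n α, zero_mul]
  have hzero : ∀ y : E, ∑ i, w i * Real.exp ⟪z i, y⟫ = 0 := by
    intro y
    rw [sum_mul_exp (fun i => w i) (fun i => ⟪z i, y⟫)]
    have h0 : ∀ n : ℕ, ∑ i, w i * (⟪z i, y⟫ ^ n / (Nat.factorial n)) = 0 := by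
      intro n
      have : ∑ i, w i * (⟪z i, y⟫ ^ n / (Nat.factorial n))
          = (∑ i, w i * ⟪z i, y⟫ ^ n) / (Nat.factorial n) := by
        rw [Finset.sum_div]
        exact Finset.sum_congr rfl fun i _ => by ring
      rw [this, hmom y n, zero_div]
    calc ∑' n : ℕ, ∑ i, w i * (⟪z i, y⟫ ^ n / (Nat.factorial n))
        = ∑' _ : ℕ, (0 : ℝ) := tsum_congr h0
      _ = 0 := tsum_zero
  exact hw (eq_zero_of_sum_exp_eq_zero w z hz hzero)

end GaussianRBF

open GaussianRBF
open scoped RealInnerProductSpace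

/-- For pairwise distinct nodes `x₁, …, x_N ∈ ℝ^d` and any shape parameter `ε > 0`, the
Gaussian RBF interpolation matrix `A_{ij} = exp(-ε²‖xᵢ - xⱼ‖²)` is symmetric positive
definite; in particular it is invertible. -/
theorem gaussian_matrix_posDef (d N : ℕ) (x : Fin N → EuclideanSpace ℝ (Fin d))
    (hx : Function.Injective x) (ε : ℝ) (hε : 0 < ε) :
    (Matrix.of fun i j : Fin N => Real.exp (-(ε ^ 2) * ‖x i - x j‖ ^ 2)).IsSymm ∧
    (Matrix.of fun i j : Fin N => Real.exp (-(ε ^ 2) * ‖x i - x j‖ ^ 2)).PosDef ∧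
    IsUnit (Matrix.of fun i j : Fin N => Real.exp (-(ε ^ 2) * ‖x i - x j‖ ^ 2)) := by
  set A : Matrix (Fin N) (Fin N) ℝ :=
    Matrix.of fun i j : Fin N => Real.exp (-(ε ^ 2) * ‖x i - x j‖ ^ 2) with hA
  -- rescaled nodes
  set z : Fin N → EuclideanSpace ℝ (Fin d) := fun i => (Real.sqrt 2 * ε) • x i with hzdef
  have hcε : (0:ℝ) < Real.sqrt 2 * ε := by positivity
  have hz : Function.Injective z := fun i j hij => by
    apply hx
    exact smul_right_injective _ (ne_of_gt hcε) hij
  -- entrywise factorization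
  have hentry : ∀ i j, A i j
      = Real.exp (-(ε^2) * ‖x i‖^2) * Real.exp (-(ε^2) * ‖x j‖^2) * Real.exp ⟪z i, z j⟫ := by
    intro i j
    rw [hA]
    simp only [Matrix.of_apply]
    rw [← Real.exp_add, ← Real.exp_add]
    congr 1
    have hnorm : ‖x i - x j‖^2 = ‖x i‖^2 - 2 * ⟪x i, x j⟫ + ‖x j‖^2 := by
      rw [← real_inner_self_eq_norm_sq, ← real_inner_self_eq_norm_sq,
        ← real_inner_self_eq_norm_sq, inner_sub_sub_self, real_inner_comm (x j) (x i)]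
      ring
    have hinner : ⟪z i, z j⟫ = 2 * ε^2 * ⟪x i, x j⟫ := by
      have hcc : Real.sqrt 2 * ε * (Real.sqrt 2 * ε) = 2 * ε ^ 2 := by
        have h2 : Real.sqrt 2 * Real.sqrt 2 = 2 := Real.mul_self_sqrt (by norm_num)
        linear_combination ε ^ 2 * h2
      rw [hzdef]
      rw [real_inner_smul_left, real_inner_smul_right, ← mul_assoc, hcc]
    rw [hnorm, hinner]
    ring
  have hsymm : A.IsSymm := by
    apply Matrix.IsSymm.ext
    intro i j
    rw [hA]
    simp only [Matrix.of_apply]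
    rw [norm_sub_rev]
  have hherm : A.IsHermitian := by
    rw [Matrix.IsHermitian, Matrix.conjTranspose_eq_transpose_of_trivial]
    exact hsymm
  have hpd : A.PosDef := by
    rw [Matrix.posDef_iff_dotProduct_mulVec]
    refine ⟨hherm, ?_⟩
    intro v hv
    have hQ : dotProduct (star v) (A.mulVec v)
        = ∑ i, ∑ j, (v i * Real.exp (-(ε^2) * ‖x i‖^2))
            * (v j * Real.exp (-(ε^2) * ‖x j‖^2)) * Real.exp ⟪z i, z j⟫ := by
      simp only [dotProduct, Matrix.mulVec, star_trivial]
      refine Finset.sum_congr rfl fun i _ => ?_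
      rw [Finset.mul_sum]
      refine Finset.sum_congr rfl fun j _ => ?_
      rw [hentry i j]
      ring
    rw [hQ]
    set w : Fin N → ℝ := fun i => v i * Real.exp (-(ε^2) * ‖x i‖^2) with hwdef
    have hw : w ≠ 0 := by
      intro h
      apply hv
      funext i
      have := congrFun h i
      rw [hwdef] at this
      simp only at this
      rcases mul_eq_zero.mp this with h0 | h0
      · exact h0
      · exact absurd h0 (Real.exp_ne_zero _)
    exact quadform_pos w z hz hw
  exact ⟨hsymm, hpd, hpd.isUnit⟩
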